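/- arXiv:2602.08114 — 5 statements merged into one kernel-verified Lean document; each statement's English description precedes it below -/
import Mathlib

section
/- Fix ω ∈ (0,1), β > 0, x ≥ 0, and let t₀ = min(e^{βx}, 1/(1−ω)). Then ω·ln(1 − (1−ω)·t₀·e^{−βx}) + (1−ω)·ln(t₀) ≤ −(1−ω)·ln(1−ω). -/
open Real

/-- For `ω ∈ (0,1)`, `β > 0`, `x ≥ 0` and `t₀ = min(e^{βx}, 1/(1−ω))`,
`ω ln(1 − (1−ω) t₀ e^{−βx}) + (1−ω) ln t₀ ≤ −(1−ω) ln(1−ω)`. -/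
theorem per_trial_objective_max_bound
    (w β x : ℝ) (hw : w ∈ Set.Ioo (0 : ℝ) 1) (hβ : 0 < β) (hx : 0 ≤ x) :
    w * Real.log (1 - (1 - w) * min (Real.exp (β * x)) (1 / (1 - w)) * Real.exp (-β * x)) +
        (1 - w) * Real.log (min (Real.exp (β * x)) (1 / (1 - w))) ≤
      -(1 - w) * Real.log (1 - w) := by
  obtain ⟨hw0, hw1⟩ := hw
  have h1w : 0 < 1 - w := by linarith
  have hEE : Real.exp (β * x) * Real.exp (-β * x) = 1 := by
    rw [← Real.exp_add]; ring_nf; exact Real.exp_zero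
  rcases le_or_gt (Real.exp (β * x)) (1 / (1 - w)) with h | h
  · rw [min_eq_left h]
    have h2 : (1 - w) * Real.exp (β * x) * Real.exp (-β * x) = 1 - w := by
      rw [mul_assoc, hEE, mul_one]
    rw [h2]
    have h3 : (1 : ℝ) - (1 - w) = w := by ring
    rw [h3]
    have hlogw : Real.log w ≤ 0 := Real.log_nonpos hw0.le hw1.le
    have hlogE : Real.log (Real.exp (β * x)) ≤ Real.log (1 / (1 - w)) := by
      apply Real.log_le_log (Real.exp_pos _) h
    have : Real.log (1 / (1 - w)) = -Real.log (1 - w) := by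
      rw [one_div, Real.log_inv]
    nlinarith [mul_le_mul_of_nonneg_left hlogE h1w.le, mul_nonpos_of_nonneg_of_nonpos hw0.le hlogw]
  · rw [min_eq_right h.le]
    have h4 : (1 - w) * (1 / (1 - w)) * Real.exp (-β * x) = Real.exp (-β * x) := by
      field_simp
    rw [h4]
    have hexp : Real.exp (-β * x) ≤ 1 := by
      apply Real.exp_le_one_iff.mpr
      nlinarith [mul_nonneg hβ.le hx]
    have hlog1 : Real.log (1 - Real.exp (-β * x)) ≤ 0 :=
      Real.log_nonpos (by nlinarith [Real.exp_pos (-β * x)]) (by linarith [(Real.exp_pos (-β * x)).le])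
    have h5 : Real.log (1 / (1 - w)) = -Real.log (1 - w) := by
      rw [one_div, Real.log_inv]
    rw [h5]
    nlinarith [mul_nonpos_of_nonneg_of_nonpos hw0.le hlog1]
end

section
/- Let ω ∈ (0,1), β > 0, θ_e ≥ 0 with (1−ω)e^{βθ_e} < 1, and let X be a nonnegative random variable with mean θ and variance σ². Define B(z₀) = ω²e^{z₀}/(1 − (1−ω)e^{z₀})² and L = ω(ln ω − E(ln(1 − (1−ω)e^{−β(X−θ_e)}))) + β(1−ω)(θ − θ_e). Then 0 ≤ L ≤ (β²(1−ω)/(2ω))·B(βθ_e)·(σ² + (θ−θ_e)²). -/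
open MeasureTheory Real

set_option maxHeartbeats 1000000

lemma hasDerivAt_f (w t : ℝ) (hA : 1 - (1-w) * Real.exp (-t) ≠ 0) :
    HasDerivAt (fun s => w * (Real.log w - Real.log (1 - (1-w) * Real.exp (-s))) + (1-w) * s)
      ((1-w) * (1 - Real.exp (-t)) / (1 - (1-w) * Real.exp (-t))) t := by
  have h1 : HasDerivAt (fun s : ℝ => Real.exp (-s)) (-Real.exp (-t)) t := by
    have := (Real.hasDerivAt_exp (-t)).comp t (hasDerivAt_neg t)
    simp only [mul_neg, mul_one] at this; exact this
  have h2 : HasDerivAt (fun s : ℝ => 1 - (1-w) * Real.exp (-s)) ((1-w) * Real.exp (-t)) t := by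
    have := (h1.const_mul (1-w)).const_sub 1
    exact this.congr_deriv (by ring)
  have h3 : HasDerivAt (fun s : ℝ => Real.log (1 - (1-w) * Real.exp (-s)))
      ((1-w) * Real.exp (-t) / (1 - (1-w) * Real.exp (-t))) t := h2.log hA
  have h4 := ((h3.const_sub (Real.log w)).const_mul w).add ((hasDerivAt_id t).const_mul (1-w))
  refine h4.congr_deriv ?_
  field_simp
  ring

lemma hasDerivAt_f' (w t : ℝ) (hA : 1 - (1-w) * Real.exp (-t) ≠ 0) :
    HasDerivAt (fun s => (1-w) * (1 - Real.exp (-s)) / (1 - (1-w) * Real.exp (-s)))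
      ((1-w) * w * Real.exp (-t) / (1 - (1-w) * Real.exp (-t))^2) t := by
  have h1 : HasDerivAt (fun s : ℝ => Real.exp (-s)) (-Real.exp (-t)) t := by
    have := (Real.hasDerivAt_exp (-t)).comp t (hasDerivAt_neg t)
    simp only [mul_neg, mul_one] at this; exact this
  have hN : HasDerivAt (fun s : ℝ => (1-w) * (1 - Real.exp (-s))) ((1-w) * Real.exp (-t)) t := by
    have := (h1.const_sub 1).const_mul (1-w)
    exact this.congr_deriv (by ring)
  have hD : HasDerivAt (fun s : ℝ => 1 - (1-w) * Real.exp (-s)) ((1-w) * Real.exp (-t)) t := by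
    have := (h1.const_mul (1-w)).const_sub 1
    exact this.congr_deriv (by ring)
  have := hN.div hD hA
  refine this.congr_deriv ?_
  field_simp
  ring

lemma key (w z0 : ℝ) (hw : 0 < w) (hw1 : w < 1) (hz0 : 0 ≤ z0)
    (hfin : (1-w) * Real.exp z0 < 1) (t : ℝ) (ht : -z0 ≤ t) :
    0 ≤ w * (Real.log w - Real.log (1 - (1-w) * Real.exp (-t))) + (1-w) * t ∧
    w * (Real.log w - Real.log (1 - (1-w) * Real.exp (-t))) + (1-w) * t ≤
      ((1-w)/(2*w)) * (w^2 * Real.exp z0 / (1 - (1-w) * Real.exp z0)^2) * t^2 := by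
  have hw0 : (0:ℝ) < 1 - w := by linarith
  have hez0 : (0:ℝ) < 1 - (1-w) * Real.exp z0 := by linarith
  have hA : ∀ s : ℝ, -z0 ≤ s → 0 < 1 - (1-w) * Real.exp (-s) := by
    intro s hs
    have h1 : Real.exp (-s) ≤ Real.exp z0 := Real.exp_le_exp.2 (by linarith)
    have := mul_le_mul_of_nonneg_left h1 hw0.le
    linarith
  set f : ℝ → ℝ := fun s => w * (Real.log w - Real.log (1 - (1-w) * Real.exp (-s))) + (1-w) * s
    with hf
  set f' : ℝ → ℝ := fun s => (1-w) * (1 - Real.exp (-s)) / (1 - (1-w) * Real.exp (-s)) with hf'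
  set f'' : ℝ → ℝ := fun s => (1-w) * w * Real.exp (-s) / (1 - (1-w) * Real.exp (-s))^2 with hf''
  set K : ℝ := ((1-w)/(2*w)) * (w^2 * Real.exp z0 / (1 - (1-w) * Real.exp z0)^2) with hK
  have hApos := hA t ht
  have hf0 : f 0 = 0 := by
    simp only [hf, neg_zero, Real.exp_zero, mul_one, mul_zero, add_zero]
    have : 1 - (1 - w) = w := by ring
    rw [this]; ring
  have hf'0 : f' 0 = 0 := by
    simp [hf']
  -- lower bound
  have lower : 0 ≤ f t := by
    have e2 : Real.log ((1 - (1-w) * Real.exp (-t)) / w) ≤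
        (1 - (1-w) * Real.exp (-t)) / w - 1 :=
      Real.log_le_sub_one_of_pos (div_pos hApos hw)
    rw [Real.log_div hApos.ne' hw.ne'] at e2
    have e3 : -t + 1 ≤ Real.exp (-t) := Real.add_one_le_exp (-t)
    have e4 := mul_le_mul_of_nonneg_left e2 hw.le
    have e5 : w * ((1 - (1-w) * Real.exp (-t)) / w - 1) = (1-w) * (1 - Real.exp (-t)) := by
      field_simp; ring
    rw [e5] at e4
    simp only [hf]
    nlinarith [mul_le_mul_of_nonneg_left e3 hw0.le]
  -- curvature bound
  have h2K : ∀ s : ℝ, -z0 ≤ s → f'' s ≤ 2 * K := by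
    intro s hs
    have hx : (0:ℝ) < Real.exp (-s) := Real.exp_pos _
    have hy : (0:ℝ) < Real.exp z0 := Real.exp_pos _
    have hxy : Real.exp (-s) ≤ Real.exp z0 := Real.exp_le_exp.2 (by linarith)
    have hAs := hA s hs
    have hax : (1-w) * Real.exp (-s) < 1 := by linarith
    have hay : (1-w) * Real.exp z0 < 1 := hfin
    have haxnn : 0 ≤ (1-w) * Real.exp (-s) := by positivity
    have haynn : 0 ≤ (1-w) * Real.exp z0 := by positivity
    have haxy : (1-w) * Real.exp (-s) * ((1-w) * Real.exp z0) ≤ 1 := by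
      nlinarith
    have h2Keq : 2 * K = (1-w) * w * Real.exp z0 / (1 - (1-w) * Real.exp z0)^2 := by
      rw [hK]; field_simp
    rw [h2Keq, hf'']
    rw [div_le_div_iff₀ (by positivity) (by positivity)]
    nlinarith [mul_nonneg (mul_nonneg hw0.le hw.le)
      (mul_nonneg (sub_nonneg.2 hxy) (sub_nonneg.2 haxy))]
  have hKnn : 0 ≤ K := by positivity
  have hfD : ∀ s : ℝ, -z0 ≤ s → HasDerivAt f (f' s) s := fun s hs =>
    hasDerivAt_f w s (hA s hs).ne'
  have hf'D : ∀ s : ℝ, -z0 ≤ s → HasDerivAt f' (f'' s) s := fun s hs =>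
    hasDerivAt_f' w s (hA s hs).ne'
  set G : ℝ → ℝ := fun s => K * s^2 - f s with hG
  have hGD : ∀ s : ℝ, -z0 ≤ s → HasDerivAt G (2*K*s - f' s) s := by
    intro s hs
    have hq : HasDerivAt (fun s : ℝ => K * s^2) (K * (2*s)) s := by
      simpa using (hasDerivAt_pow 2 s).const_mul K
    have := hq.sub (hfD s hs)
    exact this.congr_deriv (by ring)
  have hG0 : G 0 = 0 := by simp [hG, hf0]
  -- upper bound
  have upper : f t ≤ K * t^2 := by
    rcases lt_trichotomy t 0 with htneg | hteq | htpos
    · -- t < 0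
      have hcont : ContinuousOn G (Set.Icc t 0) := fun s hs =>
        (hGD s (le_trans ht hs.1)).continuousAt.continuousWithinAt
      obtain ⟨c, hc, hcs⟩ := exists_hasDerivAt_eq_slope G (fun s => 2*K*s - f' s) htneg hcont
        (fun s hs => hGD s (le_trans ht hs.1.le))
      have hcz : -z0 ≤ c := le_trans ht hc.1.le
      have hcont2 : ContinuousOn f' (Set.Icc c 0) := fun s hs =>
        (hf'D s (le_trans hcz hs.1)).continuousAt.continuousWithinAt
      obtain ⟨d, hd, hds⟩ := exists_hasDerivAt_eq_slope f' f'' hc.2 hcont2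
        (fun s hs => hf'D s (le_trans hcz hs.1.le))
      have hdz : -z0 ≤ d := le_trans hcz hd.1.le
      have hfd := h2K d hdz
      rw [hf'0] at hds; rw [hG0] at hcs
      have hcne : (0:ℝ) - c ≠ 0 := by have := hc.2; intro h; linarith [h]
      have htne : (0:ℝ) - t ≠ 0 := by intro h; linarith [h]
      have h1 : 0 - f' c = f'' d * (0 - c) := (div_eq_iff hcne).mp hds.symm
      have h2 : 0 - G t = (2*K*c - f' c) * (0 - t) := (div_eq_iff htne).mp hcs.symm
      have hGt : 0 ≤ G t := by
        nlinarith [mul_nonneg (sub_nonneg.2 hfd)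
          (mul_pos_of_neg_of_neg hc.2 htneg).le]
      simp only [hG] at hGt
      linarith
    · rw [hteq, hf0]
      nlinarith
    · -- t > 0
      have h0z : -z0 ≤ (0:ℝ) := by linarith
      have hcont : ContinuousOn G (Set.Icc 0 t) := fun s hs =>
        (hGD s (le_trans h0z hs.1)).continuousAt.continuousWithinAt
      obtain ⟨c, hc, hcs⟩ := exists_hasDerivAt_eq_slope G (fun s => 2*K*s - f' s) htpos hcont
        (fun s hs => hGD s (le_trans h0z hs.1.le))
      have hcz : -z0 ≤ c := le_trans h0z hc.1.le
      have hcont2 : ContinuousOn f' (Set.Icc 0 c) := fun s hs =>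
        (hf'D s (le_trans h0z hs.1)).continuousAt.continuousWithinAt
      obtain ⟨d, hd, hds⟩ := exists_hasDerivAt_eq_slope f' f'' hc.1 hcont2
        (fun s hs => hf'D s (le_trans h0z hs.1.le))
      have hdz : -z0 ≤ d := le_trans h0z hd.1.le
      have hfd := h2K d hdz
      rw [hf'0] at hds; rw [hG0] at hcs
      have hcne : c - 0 ≠ 0 := by have := hc.1; intro h; linarith [h]
      have htne : t - 0 ≠ 0 := by intro h; linarith [h]
      have h1 : f' c - 0 = f'' d * (c - 0) := (div_eq_iff hcne).mp hds.symm
      have h2 : G t - 0 = (2*K*c - f' c) * (t - 0) := (div_eq_iff htne).mp hcs.symm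
      have hGt : 0 ≤ G t := by
        nlinarith [mul_nonneg (sub_nonneg.2 hfd) (mul_nonneg hc.1.le htpos.le)]
      simp only [hG] at hGt
      linarith
  exact ⟨lower, upper⟩

/-- Bounds on the per-trial gap contribution `L`: for `ω ∈ (0,1)`, `β > 0`, `θ_e ≥ 0`
with `(1−ω)e^{βθ_e} < 1`, and a nonnegative random variable `X` with mean `θ` and
variance `σ²`, with `B(z₀) = ω² e^{z₀}/(1 − (1−ω)e^{z₀})²`,
`0 ≤ L ≤ (β²(1−ω)/(2ω)) B(βθ_e) (σ² + (θ−θ_e)²)`. -/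
theorem per_trial_gap_bounds
    {Ω : Type*} {m0 : MeasurableSpace Ω} {μ : Measure Ω} [IsProbabilityMeasure μ]
    (w β θe θ σ : ℝ) (hw : w ∈ Set.Ioo (0 : ℝ) 1) (hβ : 0 < β) (hθe : 0 ≤ θe)
    (hfin : (1 - w) * Real.exp (β * θe) < 1)
    (X : Ω → ℝ) (hXmeas : Measurable X) (hXnonneg : ∀ ω, 0 ≤ X ω)
    (hXint : Integrable X μ) (hmean : ∫ ω, X ω ∂μ = θ)
    (hXsqint : Integrable (fun ω => (X ω - θ) ^ 2) μ)
    (hvar : ∫ ω, (X ω - θ) ^ 2 ∂μ = σ ^ 2)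
    (hlogint : Integrable (fun ω => Real.log (1 - (1 - w) * Real.exp (-β * (X ω - θe)))) μ) :
    0 ≤ w * (Real.log w - ∫ ω, Real.log (1 - (1 - w) * Real.exp (-β * (X ω - θe))) ∂μ) +
        β * (1 - w) * (θ - θe) ∧
      w * (Real.log w - ∫ ω, Real.log (1 - (1 - w) * Real.exp (-β * (X ω - θe))) ∂μ) +
          β * (1 - w) * (θ - θe) ≤
        (β ^ 2 * (1 - w) / (2 * w)) *
          (w ^ 2 * Real.exp (β * θe) / (1 - (1 - w) * Real.exp (β * θe)) ^ 2) *
          (σ ^ 2 + (θ - θe) ^ 2) := by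
  obtain ⟨hw0, hw1⟩ := hw
  have hz0 : 0 ≤ β * θe := by positivity
  set C : ℝ := ((1-w)/(2*w)) * (w^2 * Real.exp (β*θe) / (1 - (1-w) * Real.exp (β*θe))^2) * β^2
    with hC
  set g : Ω → ℝ := fun ω =>
    w * (Real.log w - Real.log (1 - (1-w) * Real.exp (-β * (X ω - θe)))) + (1-w) * (β * (X ω - θe))
    with hg
  have hpt : ∀ ω, 0 ≤ g ω ∧ g ω ≤ C * (X ω - θe)^2 := by
    intro ω
    have ht : -(β*θe) ≤ β * (X ω - θe) := by nlinarith [hXnonneg ω]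
    have hk := key w (β*θe) hw0 hw1 hz0 hfin (β * (X ω - θe)) ht
    rw [← neg_mul] at hk
    constructor
    · exact hk.1
    · refine le_trans hk.2 (le_of_eq ?_)
      rw [hC]; ring
  -- integrability
  have hg1 : Integrable (fun ω => Real.log w -
      Real.log (1 - (1-w) * Real.exp (-β * (X ω - θe)))) μ := (integrable_const _).sub hlogint
  have hg2 : Integrable (fun ω => β * (X ω - θe)) μ :=
    (hXint.sub (integrable_const θe)).const_mul β
  have hgint : Integrable g μ := (hg1.const_mul w).add (hg2.const_mul (1-w))
  have hsqint : Integrable (fun ω => (X ω - θe)^2) μ := by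
    have he : (fun ω => (X ω - θe)^2) =
        fun ω => (X ω - θ)^2 + (2*(θ-θe)) * X ω + ((θ-θe)^2 - 2*θ*(θ-θe)) := by
      funext ω; ring
    rw [he]
    exact (hXsqint.add (hXint.const_mul _)).add (integrable_const _)
  have hI2 : ∫ ω, (X ω - θe)^2 ∂μ = σ^2 + (θ - θe)^2 := by
    have he : (fun ω => (X ω - θe)^2) =
        fun ω => (X ω - θ)^2 + (2*(θ-θe)) * X ω + ((θ-θe)^2 - 2*θ*(θ-θe)) := by
      funext ω; ring
    have ha : Integrable (fun ω => (X ω - θ)^2 + (2*(θ-θe)) * X ω) μ :=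
      hXsqint.add (hXint.const_mul _)
    rw [he, integral_add ha (integrable_const _),
      integral_add hXsqint (hXint.const_mul _), integral_const_mul, hvar, hmean,
      integral_const]
    simp only [measure_univ, probReal_univ, ENNReal.toReal_one, smul_eq_mul, one_mul, one_smul]
    ring
  have hIg : ∫ ω, g ω ∂μ =
      w * (Real.log w - ∫ ω, Real.log (1 - (1-w) * Real.exp (-β * (X ω - θe))) ∂μ) +
        β * (1-w) * (θ - θe) := by
    rw [hg, integral_add (hg1.const_mul w) (hg2.const_mul (1-w)), integral_const_mul,
      integral_const_mul, integral_sub (integrable_const _) hlogint,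
      integral_const_mul, integral_sub hXint (integrable_const θe), hmean,
      integral_const, integral_const]
    simp only [measure_univ, probReal_univ, ENNReal.toReal_one, smul_eq_mul, one_mul, one_smul]
    ring
  constructor
  · rw [← hIg]
    exact integral_nonneg fun ω => (hpt ω).1
  · have h1 : ∫ ω, g ω ∂μ ≤ ∫ ω, C * (X ω - θe)^2 ∂μ :=
      integral_mono hgint (hsqint.const_mul C) fun ω => (hpt ω).2
    rw [hIg, integral_const_mul, hI2] at h1
    refine le_trans h1 (le_of_eq ?_)
    rw [hC]; ring
end

section
/- Let ω ∈ (0,1) and v₀ ∈ (0,1). With v = (1−ω)v₀ + ω and z_u = ln((1 − vω)/(1−ω)), we have B(z_u) = (1 + ω(1−v₀))/((v₀ + ω(1−v₀))²) ≤ 1/v₀². In particular, with v₀ = 1/√2, B(z_u) ≤ 2. -/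
open Real

/-- For `ω ∈ (0,1)`, `v₀ ∈ (0,1)`, with `v = (1−ω)v₀ + ω` and
`z_u = ln((1 − vω)/(1−ω))`, the quantity `B(z_u) = ω² e^{z_u}/(1 − (1−ω)e^{z_u})²` equals
`(1 + ω(1−v₀))/((v₀ + ω(1−v₀))²)` and is at most `1/v₀²`; in particular, for `v₀ = 1/√2`,
`B(z_u) ≤ 2`. -/
theorem B_cutoff_bound
    (w v₀ : ℝ) (hw : w ∈ Set.Ioo (0 : ℝ) 1) (hv₀ : v₀ ∈ Set.Ioo (0 : ℝ) 1) :
    (w ^ 2 * Real.exp (Real.log ((1 - ((1 - w) * v₀ + w) * w) / (1 - w))) /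
          (1 - (1 - w) * Real.exp (Real.log ((1 - ((1 - w) * v₀ + w) * w) / (1 - w)))) ^ 2 =
        (1 + w * (1 - v₀)) / (v₀ + w * (1 - v₀)) ^ 2) ∧
      (w ^ 2 * Real.exp (Real.log ((1 - ((1 - w) * v₀ + w) * w) / (1 - w))) /
          (1 - (1 - w) * Real.exp (Real.log ((1 - ((1 - w) * v₀ + w) * w) / (1 - w)))) ^ 2 ≤
        1 / v₀ ^ 2) ∧
      (v₀ = 1 / Real.sqrt 2 →
        w ^ 2 * Real.exp (Real.log ((1 - ((1 - w) * v₀ + w) * w) / (1 - w))) /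
            (1 - (1 - w) * Real.exp (Real.log ((1 - ((1 - w) * v₀ + w) * w) / (1 - w)))) ^ 2 ≤
          2) := by
  obtain ⟨hw0, hw1⟩ := hw
  obtain ⟨hv0, hv1⟩ := hv₀
  have hA : (1 - ((1 - w) * v₀ + w) * w) / (1 - w) = 1 + w * (1 - v₀) := by
    rw [div_eq_iff (by linarith : (1:ℝ) - w ≠ 0)]
    ring
  have hApos : (0:ℝ) < 1 + w * (1 - v₀) := by nlinarith
  have hexp : Real.exp (Real.log ((1 - ((1 - w) * v₀ + w) * w) / (1 - w)))
      = 1 + w * (1 - v₀) := by rw [hA, Real.exp_log hApos]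
  rw [hexp]
  have hden : 1 - (1 - w) * (1 + w * (1 - v₀)) = w * (v₀ + w * (1 - v₀)) := by ring
  have hdpos : (0:ℝ) < v₀ + w * (1 - v₀) := by nlinarith
  have heq : w ^ 2 * (1 + w * (1 - v₀)) / (1 - (1 - w) * (1 + w * (1 - v₀))) ^ 2
      = (1 + w * (1 - v₀)) / (v₀ + w * (1 - v₀)) ^ 2 := by
    rw [hden]
    rw [mul_pow]
    rw [div_eq_div_iff (by positivity) (by positivity)]
    ring
  refine ⟨heq, ?_, ?_⟩
  · rw [heq, div_le_div_iff₀ (by positivity) (by positivity)]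
    nlinarith [sq_nonneg (w * (1 - v₀)), mul_pos hw0 (mul_pos hv0 (by linarith : (0:ℝ) < 2 - v₀))]
  · intro hv
    have h2 : v₀ ^ 2 = 1 / 2 := by
      rw [hv]; rw [div_pow, one_pow, Real.sq_sqrt (by norm_num : (2:ℝ) ≥ 0)]
    rw [heq, div_le_iff₀ (by positivity)]
    have hle : (1 + w * (1 - v₀)) / (v₀ + w * (1 - v₀)) ^ 2 ≤ 1 / v₀ ^ 2 := by
      rw [div_le_div_iff₀ (by positivity) (by positivity)]
      nlinarith [sq_nonneg (w * (1 - v₀)), mul_pos hw0 (mul_pos hv0 (by linarith : (0:ℝ) < 2 - v₀))]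
    rw [div_le_div_iff₀ (by positivity) (by positivity), h2] at hle
    linarith
end

section
/- Let n, m be positive integers, ω ∈ (0,1), γ > 0, and let C_n be a binomial random variable with parameters n and 1−ω (counting unchecked trials). If n ≥ (m/(1−ω))·(1 + (γ + √(γ² + 8m(1−ω)γ))/(4m(1−ω))), then P(C_n < m) ≤ e^{−γ}. -/
open MeasureTheory Real

set_option maxHeartbeats 1000000


lemma bernoulli_hoeffding {p q : ℝ} (hp : 0 < p) (hq : 0 < q) (hpq : p + q = 1)
    {t : ℝ} (ht : 0 ≤ t) :
    p * Real.exp (-t) + q ≤ Real.exp (-p * t + t ^ 2 / 8) := by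
  set u : ℝ → ℝ := fun x => p * Real.exp (-x) + q with hu_def
  have hu : ∀ x, 0 < u x := fun x => add_pos (mul_pos hp (exp_pos _)) hq
  set g : ℝ → ℝ := fun x => -p * x + x ^ 2 / 8 - Real.log (u x) with hg_def
  set g' : ℝ → ℝ := fun x => -p + x / 4 + p * Real.exp (-x) / u x with hg'_def
  have hderiv_u : ∀ x : ℝ, HasDerivAt u (-(p * Real.exp (-x))) x := by
    intro x
    have h1 : HasDerivAt (fun y : ℝ => -y) (-1) x := (hasDerivAt_id x).neg
    have h2 : HasDerivAt (fun y : ℝ => Real.exp (-y)) (Real.exp (-x) * -1) x :=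
      (Real.hasDerivAt_exp (-x)).comp x h1
    have h3 := (h2.const_mul p).add_const q
    refine h3.congr_deriv ?_
    ring
  have hpe : ∀ x : ℝ, HasDerivAt (fun y : ℝ => p * Real.exp (-y)) (-(p * Real.exp (-x))) x := by
    intro x
    have h1 : HasDerivAt (fun y : ℝ => -y) (-1) x := (hasDerivAt_id x).neg
    have h2 : HasDerivAt (fun y : ℝ => Real.exp (-y)) (Real.exp (-x) * -1) x :=
      (Real.hasDerivAt_exp (-x)).comp x h1
    refine (h2.const_mul p).congr_deriv ?_
    ring
  have hpoly : ∀ x : ℝ, HasDerivAt (fun y : ℝ => -p * y + y ^ 2 / 8) (-p + x / 4) x := by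
    intro x
    have h1 : HasDerivAt (fun y : ℝ => -p * y) (-p) x := by
      simpa using (hasDerivAt_id x).const_mul (-p)
    have h2 : HasDerivAt (fun y : ℝ => y ^ 2 / 8) ((2 : ℕ) * x ^ 1 / 8) x :=
      (hasDerivAt_pow 2 x).div_const 8
    refine (h1.add h2).congr_deriv ?_
    push_cast
    ring
  have hg : ∀ x : ℝ, HasDerivAt g (g' x) x := by
    intro x
    have h2 : HasDerivAt (fun y => Real.log (u y)) (-(p * Real.exp (-x)) / u x) x :=
      (hderiv_u x).log (hu x).ne'
    refine ((hpoly x).sub h2).congr_deriv ?_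
    simp only [hg'_def]
    ring
  have hg' : ∀ x : ℝ, HasDerivAt g' (1 / 4 - p * q * Real.exp (-x) / (u x) ^ 2) x := by
    intro x
    have hdiv : HasDerivAt (fun y => p * Real.exp (-y) / u y)
        ((-(p * Real.exp (-x)) * u x - p * Real.exp (-x) * -(p * Real.exp (-x))) / (u x) ^ 2) x :=
      (hpe x).div (hderiv_u x) (hu x).ne'
    have hlin : HasDerivAt (fun y : ℝ => -p + y / 4) (1 / 4) x := by
      simpa using ((hasDerivAt_id x).div_const 4).const_add (-p)
    refine (hlin.add hdiv).congr_deriv ?_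
    have hux : u x = p * Real.exp (-x) + q := rfl
    have : (-(p * Real.exp (-x)) * u x - p * Real.exp (-x) * -(p * Real.exp (-x)))
        = -(p * q * Real.exp (-x)) := by
      rw [hux]; ring
    rw [this]
    ring
  have hg'nonneg : ∀ x : ℝ, 0 ≤ x → 0 ≤ g' x := by
    have hmono : Monotone g' := by
      apply monotone_of_deriv_nonneg (fun x => (hg' x).differentiableAt)
      intro x
      rw [(hg' x).deriv]
      have hux : u x = p * Real.exp (-x) + q := rfl
      have hu2 : 0 < (u x) ^ 2 := by positivity
      rw [sub_nonneg, div_le_iff₀ hu2, hux]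
      nlinarith [sq_nonneg (p * Real.exp (-x) - q)]
    intro x hx
    have hu0 : u 0 = 1 := by simp [hu_def, hpq]
    have h0 : g' 0 = 0 := by simp [hg'_def, hu0]
    calc (0:ℝ) = g' 0 := h0.symm
    _ ≤ g' x := hmono hx
  have hgnonneg : 0 ≤ g t := by
    have hmono : MonotoneOn g (Set.Ici 0) := by
      apply monotoneOn_of_deriv_nonneg (convex_Ici 0)
      · exact (fun x _ => (hg x).differentiableAt.continuousAt.continuousWithinAt)
      · intro x hx
        exact (hg x).differentiableAt.differentiableWithinAt
      · intro x hx
        rw [interior_Ici] at hx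
        rw [(hg x).deriv]
        exact hg'nonneg x hx.le
    have hu0 : u 0 = 1 := by simp [hu_def, hpq]
    have h0 : g 0 = 0 := by simp [hg_def, hu0]
    calc (0:ℝ) = g 0 := h0.symm
    _ ≤ g t := hmono Set.self_mem_Ici (Set.mem_Ici.2 ht) ht
  have hlog : Real.log (u t) ≤ -p * t + t ^ 2 / 8 := by
    have h := hgnonneg
    simp only [hg_def] at h
    linarith
  calc p * Real.exp (-t) + q = u t := rfl
  _ = Real.exp (Real.log (u t)) := (Real.exp_log (hu t)).symm
  _ ≤ Real.exp (-p * t + t ^ 2 / 8) := Real.exp_le_exp.2 hlog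

lemma binomial_tail_core (n m : ℕ) (hn : 0 < n) (hm : 0 < m) (w γ : ℝ)
    (hw : w ∈ Set.Ioo (0 : ℝ) 1) (hγ : 0 < γ)
    (hn_large : ((m : ℝ) / (1 - w)) *
        (1 + (γ + Real.sqrt (γ ^ 2 + 8 * m * (1 - w) * γ)) / (4 * m * (1 - w))) ≤ n) :
    ∑ k ∈ Finset.range m, (n.choose k : ℝ) * (1 - w) ^ k * w ^ (n - k) ≤ Real.exp (-γ) := by
  obtain ⟨hw0, hw1⟩ := hw
  set p : ℝ := 1 - w with hp_def
  have hp : 0 < p := by rw [hp_def]; linarith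
  have hp1 : p < 1 := by rw [hp_def]; linarith
  have hm0 : (0:ℝ) < m := by exact_mod_cast hm
  have hn0 : (0:ℝ) < n := by exact_mod_cast hn
  set s : ℝ := Real.sqrt (γ ^ 2 + 8 * m * p * γ) with hs_def
  have hs0 : 0 ≤ s := Real.sqrt_nonneg _
  have hs2 : s ^ 2 = γ ^ 2 + 8 * m * p * γ := Real.sq_sqrt (by positivity)
  have hsγ : γ ≤ s := by
    have h := Real.sqrt_le_sqrt (show γ ^ 2 ≤ γ ^ 2 + 8 * ↑m * p * γ by nlinarith [mul_pos (mul_pos hm0 hp) hγ])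
    rw [Real.sqrt_sq hγ.le] at h
    exact h
  have hd1 : (m : ℝ) + (γ + s) / (4 * p) ≤ n * p := by
    have hmul := mul_le_mul_of_nonneg_right hn_large hp.le
    have heq : ((m : ℝ) / p) * (1 + (γ + s) / (4 * m * p)) * p
        = m + (γ + s) / (4 * p) := by
      field_simp
    rw [heq] at hmul
    linarith
  set d : ℝ := n * p - m with hd_def
  have hd2 : (γ + s) / (4 * p) ≤ d := by rw [hd_def]; linarith
  have hd0 : 0 < d := lt_of_lt_of_le (by positivity) hd2
  have hmn : m < n := by
    have h1 : (m : ℝ) < n * p := by linarith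
    have h2 : (n : ℝ) * p ≤ n := by nlinarith
    have : (m : ℝ) < n := lt_of_lt_of_le h1 h2
    exact_mod_cast this
  set t : ℝ := 4 * d / n with ht_def
  have ht0 : 0 < t := by positivity
  have hA : 0 ≤ 4 * p * d - (γ + s) := by
    have := (div_le_iff₀ (by positivity : (0:ℝ) < 4 * p)).mp hd2
    linarith
  have key1 : 8 * m * p * γ ≤ 4 * p * d * (s - γ) := by
    nlinarith [mul_nonneg hA (sub_nonneg.2 hsγ)]
  have key2 : 2 * (m:ℝ) * γ ≤ d * (s - γ) := by
    nlinarith [key1, hp, mul_pos hm0 hγ]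
  have hquad : γ * ((m:ℝ) + d) ≤ 2 * p * d ^ 2 := by
    nlinarith [mul_nonneg hA hd0.le, key2]
  have hγn : γ * n ≤ 2 * d ^ 2 := by
    have hnp : (n:ℝ) * p = m + d := by rw [hd_def]; ring
    have h1 : γ * ((n:ℝ) * p) ≤ 2 * p * d ^ 2 := by rw [hnp]; exact hquad
    have h2 : (γ * ↑n) * p ≤ (2 * d ^ 2) * p := by
      ring_nf
      ring_nf at h1
      linarith
    exact le_of_mul_le_mul_right h2 hp
  have hbern : p * Real.exp (-t) + w ≤ Real.exp (-p * t + t ^ 2 / 8) := by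
    have hpw : p + w = 1 := by rw [hp_def]; ring
    exact bernoulli_hoeffding hp hw0 hpw ht0.le
  calc ∑ k ∈ Finset.range m, (n.choose k : ℝ) * p ^ k * w ^ (n - k)
      ≤ ∑ k ∈ Finset.range m,
          (n.choose k : ℝ) * p ^ k * w ^ (n - k) * Real.exp (t * ((m:ℝ) - k)) := by
        apply Finset.sum_le_sum
        intro k hk
        have hk' : (k : ℝ) ≤ m := by
          have := Finset.mem_range.mp hk
          exact_mod_cast this.le
        have h1 : (1:ℝ) ≤ Real.exp (t * ((m:ℝ) - k)) := by
          rw [← Real.exp_zero]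
          apply Real.exp_le_exp.2
          have h3 : (0:ℝ) ≤ (m:ℝ) - k := by linarith
          positivity
        have h0 : (0:ℝ) ≤ (n.choose k : ℝ) * p ^ k * w ^ (n - k) := by positivity
        exact le_mul_of_one_le_right h0 h1
    _ ≤ ∑ k ∈ Finset.range (n + 1),
          (n.choose k : ℝ) * p ^ k * w ^ (n - k) * Real.exp (t * ((m:ℝ) - k)) := by
        apply Finset.sum_le_sum_of_subset_of_nonneg
        · exact Finset.range_subset_range.2 (by omega)
        · intro k _ _
          positivity
    _ = Real.exp (t * m) * (p * Real.exp (-t) + w) ^ n := by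
        rw [add_pow, Finset.mul_sum]
        apply Finset.sum_congr rfl
        intro k _
        have he : Real.exp (t * ((m:ℝ) - k)) = Real.exp (t * m) * Real.exp (-t) ^ k := by
          rw [← Real.exp_nat_mul, ← Real.exp_add]
          congr 1
          ring
        rw [he, mul_pow]
        ring
    _ ≤ Real.exp (t * m) * (Real.exp (-p * t + t ^ 2 / 8)) ^ n := by
        apply mul_le_mul_of_nonneg_left _ (Real.exp_pos _).le
        apply pow_le_pow_left₀ (by positivity) hbern
    _ = Real.exp (t * m + n * (-p * t + t ^ 2 / 8)) := by
        rw [← Real.exp_nat_mul, ← Real.exp_add]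
    _ ≤ Real.exp (-γ) := by
        apply Real.exp_le_exp.2
        have hexp : t * m + n * (-p * t + t ^ 2 / 8) = -(2 * d ^ 2 / n) := by
          rw [ht_def, hd_def]
          field_simp
          ring
        rw [hexp, neg_le_neg_iff, le_div_iff₀ hn0]
        exact hγn

/-- Early-stopping trial count: if `C_n` is binomial with parameters `n` and `1−ω`, and
`n ≥ (m/(1−ω))(1 + (γ + √(γ² + 8m(1−ω)γ))/(4m(1−ω)))`, then `P(C_n < m) ≤ e^{−γ}`. -/
theorem early_stopping_failure_bound
    {Ω : Type*} {m0 : MeasurableSpace Ω} {μ : Measure Ω} [IsProbabilityMeasure μ]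
    (n m : ℕ) (hn : 0 < n) (hm : 0 < m) (w γ : ℝ) (hw : w ∈ Set.Ioo (0 : ℝ) 1)
    (hγ : 0 < γ) (C : Ω → ℕ) (hCmeas : Measurable C)
    (hbinom : ∀ k : ℕ, μ {ω | C ω = k} =
      ENNReal.ofReal ((n.choose k : ℝ) * (1 - w) ^ k * w ^ (n - k)))
    (hn_large : ((m : ℝ) / (1 - w)) *
        (1 + (γ + Real.sqrt (γ ^ 2 + 8 * m * (1 - w) * γ)) / (4 * m * (1 - w))) ≤ n) :
    μ {ω | C ω < m} ≤ ENNReal.ofReal (Real.exp (-γ)) := by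
  have hsets : {ω | C ω < m} = ⋃ k ∈ Finset.range m, {ω | C ω = k} := by
    ext ω
    simp only [Set.mem_setOf_eq, Set.mem_iUnion, Finset.mem_range, exists_prop]
    constructor
    · intro h
      exact ⟨C ω, h, rfl⟩
    · rintro ⟨k, hk, hck⟩
      omega
  have hmeas : ∀ k ∈ Finset.range m, MeasurableSet {ω | C ω = k} := by
    intro k _
    exact hCmeas (measurableSet_singleton k)
  have hdisj : (↑(Finset.range m) : Set ℕ).PairwiseDisjoint (fun k => {ω | C ω = k}) := by
    intro i _ j _ hij
    simp only [Function.onFun]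
    apply Set.disjoint_left.2
    intro ω h1 h2
    simp only [Set.mem_setOf_eq] at h1 h2
    exact hij (h1.symm.trans h2)
  rw [hsets, measure_biUnion_finset hdisj hmeas]
  simp_rw [hbinom]
  rw [← ENNReal.ofReal_sum_of_nonneg]
  · exact ENNReal.ofReal_le_ofReal (binomial_tail_core n m hn hm w γ hw hγ hn_large)
  · intro k _
    have h1 : (0:ℝ) < 1 - w := by linarith [hw.2]
    have h2 : (0:ℝ) < w := hw.1
    positivity
end

section
/- Let ω ∈ (0,1), β > 0, t ∈ [0, 1/(1−ω)], b = 0, and let X be a nonnegative random variable with finite mean. Suppose E(T₀) ≤ 1 where T₀ = (1−Y)(1 − (1−ω)t e^{−βX})/ω + Y t, Y independent of X with P(Y=0) = ω. If instead Y' is independent of X with P(Y'=0) = ω − δ for δ ∈ [0, ω), then E of the same functional with Y' in place of Y is at most 1 + δ(t−1)/ω. -/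
open MeasureTheory ProbabilityTheory Real


lemma key_expectation
    {Ω : Type*} {m0 : MeasurableSpace Ω} {μ : Measure Ω} [IsProbabilityMeasure μ]
    (w t : ℝ) (f Y : Ω → ℝ) (hfmeas : Measurable f) (hfb : ∀ ω, f ω ∈ Set.Icc (0:ℝ) 1)
    (hYmeas : Measurable Y) (hYvals : ∀ ω, Y ω = 0 ∨ Y ω = 1)
    (hind : IndepFun Y f μ) :
    ∫ ω, ((1 - Y ω) * f ω / w + Y ω * t) ∂μ =
      (μ {ω | Y ω = 0}).toReal * (∫ ω, f ω ∂μ) / w +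
        (1 - (μ {ω | Y ω = 0}).toReal) * t := by
  have hs : MeasurableSet {ω | Y ω = 0} := hYmeas (measurableSet_singleton 0)
  have h1Y : (fun ω => 1 - Y ω) = Set.indicator {ω | Y ω = 0} (fun _ => (1:ℝ)) := by
    funext ω; rcases hYvals ω with h | h <;> simp [h, Set.indicator, Set.mem_setOf_eq]
  have hint1Y : Integrable (fun ω => 1 - Y ω) μ :=
    (integrable_const (1:ℝ)).mono' ((measurable_const.sub hYmeas)).aestronglyMeasurable
      (ae_of_all _ fun ω => by rcases hYvals ω with h | h <;> simp [h])
  have hintY : Integrable Y μ :=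
    (integrable_const (1:ℝ)).mono' hYmeas.aestronglyMeasurable
      (ae_of_all _ fun ω => by rcases hYvals ω with h | h <;> simp [h])
  have hintf : Integrable f μ :=
    (integrable_const (1:ℝ)).mono' hfmeas.aestronglyMeasurable
      (ae_of_all _ fun ω => by
        have := hfb ω; rw [Real.norm_eq_abs, abs_of_nonneg this.1]; exact this.2)
  have hind' : IndepFun (fun ω => 1 - Y ω) f μ :=
    hind.comp (measurable_const.sub measurable_id) measurable_id
  have hintprod : Integrable (fun ω => (1 - Y ω) * f ω) μ :=
    (integrable_const (1:ℝ)).mono'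
      ((measurable_const.sub hYmeas).mul hfmeas).aestronglyMeasurable
      (ae_of_all _ fun ω => by
        rcases hYvals ω with h | h <;>
          simp [h, Real.norm_eq_abs, abs_of_nonneg (hfb ω).1, (hfb ω).2])
  have hE1Y : ∫ ω, (1 - Y ω) ∂μ = (μ {ω | Y ω = 0}).toReal := by
    rw [h1Y]; simpa [Measure.real] using integral_indicator_const (1:ℝ) hs
  have hEY : ∫ ω, Y ω ∂μ = 1 - (μ {ω | Y ω = 0}).toReal := by
    have : ∫ ω, Y ω ∂μ = ∫ ω, (1 - (1 - Y ω)) ∂μ := by simp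
    rw [this, integral_sub (integrable_const 1) hint1Y, hE1Y]
    simp
  have hmul : ∫ ω, (1 - Y ω) * f ω ∂μ =
      (∫ ω, (1 - Y ω) ∂μ) * ∫ ω, f ω ∂μ := hind'.integral_fun_mul_eq_mul_integral hint1Y.aestronglyMeasurable hintf.aestronglyMeasurable
  rw [integral_add (hintprod.div_const w) (hintY.mul_const t), integral_div,
    integral_mul_const, hmul, hE1Y, hEY]
/-- Bias robustness of estimation factors: with
`T₀ = (1−Y)(1 − (1−ω) t e^{−βX})/ω + Y t` satisfying `E(T₀) ≤ 1` for a 0/1-valued `Y`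
independent of `X ≥ 0` with `P(Y=0) = ω`, replacing `Y` by a 0/1-valued `Y'` independent of
`X` with `P(Y'=0) = ω − δ`, `δ ∈ [0, ω)`, gives expectation at most `1 + δ(t−1)/ω`. -/
theorem estimation_factor_bias_bound
    {Ω : Type*} {m0 : MeasurableSpace Ω} {μ : Measure Ω} [IsProbabilityMeasure μ]
    (w β t δ : ℝ) (hw : w ∈ Set.Ioo (0 : ℝ) 1) (hβ : 0 < β)
    (ht : t ∈ Set.Icc (0 : ℝ) (1 / (1 - w))) (hδ : δ ∈ Set.Ico (0 : ℝ) w)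
    (X Y Y' : Ω → ℝ) (hXmeas : Measurable X) (hYmeas : Measurable Y)
    (hY'meas : Measurable Y') (hXnonneg : ∀ ω, 0 ≤ X ω)
    (hYvals : ∀ ω, Y ω = 0 ∨ Y ω = 1) (hY'vals : ∀ ω, Y' ω = 0 ∨ Y' ω = 1)
    (hYindep : IndepFun Y X μ) (hY'indep : IndepFun Y' X μ)
    (hYprob : μ {ω | Y ω = 0} = ENNReal.ofReal w)
    (hY'prob : μ {ω | Y' ω = 0} = ENNReal.ofReal (w - δ))
    (hT₀ : ∫ ω, ((1 - Y ω) * (1 - (1 - w) * t * Real.exp (-β * X ω)) / w + Y ω * t) ∂μ ≤ 1) :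
    ∫ ω, ((1 - Y' ω) * (1 - (1 - w) * t * Real.exp (-β * X ω)) / w + Y' ω * t) ∂μ ≤
      1 + δ * (t - 1) / w := by
  obtain ⟨hw0, hw1⟩ := hw
  obtain ⟨ht0, ht1⟩ := ht
  obtain ⟨hδ0, hδw⟩ := hδ
  set g : ℝ → ℝ := fun x => 1 - (1 - w) * t * Real.exp (-β * x) with hg
  have hgmeas : Measurable g := by
    exact measurable_const.sub (measurable_const.mul
      ((measurable_const.mul measurable_id).exp))
  have hcoef : 0 ≤ (1 - w) * t := mul_nonneg (by linarith) ht0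
  have hcoef1 : (1 - w) * t ≤ 1 := by
    have h := (le_div_iff₀ (show (0:ℝ) < 1 - w by linarith)).mp ht1
    nlinarith
  have hfb : ∀ ω' : Ω, g (X ω') ∈ Set.Icc (0:ℝ) 1 := by
    intro ω'
    have he0 : 0 < Real.exp (-β * X ω') := Real.exp_pos _
    have he1 : Real.exp (-β * X ω') ≤ 1 := by
      apply Real.exp_le_one_iff.mpr
      have := hXnonneg ω'
      nlinarith
    constructor
    · simp only [hg]
      nlinarith
    · simp only [hg]
      nlinarith
  have hfmeas : Measurable (fun ω' => g (X ω')) := hgmeas.comp hXmeas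
  have hindY : IndepFun Y (fun ω' => g (X ω')) μ :=
    hYindep.comp measurable_id hgmeas
  have hindY' : IndepFun Y' (fun ω' => g (X ω')) μ :=
    hY'indep.comp measurable_id hgmeas
  have hkY := key_expectation w t (fun ω' => g (X ω')) Y hfmeas hfb hYmeas hYvals hindY
  have hkY' := key_expectation w t (fun ω' => g (X ω')) Y' hfmeas hfb hY'meas hY'vals hindY'
  rw [hYprob, ENNReal.toReal_ofReal hw0.le] at hkY
  rw [hY'prob, ENNReal.toReal_ofReal (by linarith)] at hkY'
  set I := ∫ ω', g (X ω') ∂μ with hI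
  rw [hkY] at hT₀
  rw [hkY']
  have hIle : I ≤ 1 - (1 - w) * t := by
    rw [mul_div_cancel_left₀ _ (ne_of_gt hw0)] at hT₀
    linarith
  have hwδ : 0 ≤ w - δ := by linarith
  have step1 : (w - δ) * I / w ≤ (w - δ) * (1 - (1 - w) * t) / w := by
    apply div_le_div_of_nonneg_right ?_ hw0.le |>.trans_eq rfl
    exact mul_le_mul_of_nonneg_left hIle hwδ
  have eqn : (w - δ) * (1 - (1 - w) * t) / w + (1 - (w - δ)) * t = 1 + δ * (t - 1) / w := by
    field_simp
    ring
  linarith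
end
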